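/- Let L > 0 and let G : ℝ → ℝ be the 2πL-periodic function with G(p) = e^{-|p-2mπL|} for (2m-1)πL ≤ p < (2m+1)πL, m ∈ ℤ. Let T > 0, η_max > 0 with πL > 3 η_max² T, ε ≥ 0, and let f : ℝ → ℂ be measurable with ∫_ℝ |f(η)|² dη < ∞ and ∫_{|η| > √3 η_max} e^{2η²T} |f(η)|² dη ≤ ε². Then ( ∫_{-πL}^{πL} ∫_ℝ | e^{-|p - η²T|} - G(p - η²T) |² |f(η)|² dη dp )^{1/2} ≤ √(5/2) · e^{-(πL - 3η_max²T)} ( ∫_ℝ |f(η)|² dη )^{1/2} + e^{-(3/2) η_max² T} ε. -/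

import Mathlib

open MeasureTheory Real

namespace Schro42

lemma round_bracket {l : ℝ} (hl : 0 < l) (p : ℝ) :
    (2 * ((round (p / (2 * l)) : ℤ) : ℝ) - 1) * l ≤ p ∧
      p < (2 * ((round (p / (2 * l)) : ℤ) : ℝ) + 1) * l := by
  set x := p / (2 * l) with hx
  have h2l : (0:ℝ) < 2 * l := by linarith
  have hp : p = x * (2 * l) := by rw [hx]; field_simp
  have h1 : ((round x : ℤ) : ℝ) ≤ x + 1 / 2 := by
    rw [round_eq]; exact_mod_cast Int.floor_le (x + 1 / 2)
  have h2 : x + 1 / 2 < ((round x : ℤ) : ℝ) + 1 := by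
    rw [round_eq]; exact_mod_cast Int.lt_floor_add_one (x + 1 / 2)
  constructor <;> nlinarith

lemma sqrt_add_le {x y : ℝ} (hx : 0 ≤ x) (hy : 0 ≤ y) :
    Real.sqrt (x + y) ≤ Real.sqrt x + Real.sqrt y := by
  have h := Real.sqrt_le_sqrt (show x + y ≤ (Real.sqrt x + Real.sqrt y) ^ 2 by
    nlinarith [Real.sq_sqrt hx, Real.sq_sqrt hy, Real.sqrt_nonneg x, Real.sqrt_nonneg y])
  rwa [Real.sqrt_sq (by positivity)] at h

lemma ii_of_meas_bdd {h : ℝ → ℝ} (hm : Measurable h) {C : ℝ} (hb : ∀ x, ‖h x‖ ≤ C)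
    (a b : ℝ) : IntervalIntegrable h volume a b := by
  rw [intervalIntegrable_iff]
  haveI : IsFiniteMeasure (volume.restrict (Set.uIoc a b)) := by
    constructor
    rw [Measure.restrict_apply_univ, Set.uIoc]
    exact measure_Ioc_lt_top
  exact ⟨hm.aestronglyMeasurable, HasFiniteIntegral.of_bounded (C := C) (.of_forall hb)⟩

lemma integral_exp_neg_two_abs {a b : ℝ} (ha : a ≤ 0) (hb : 0 ≤ b) :
    ∫ q in a..b, Real.exp (-(2 * |q|)) =
      (1 - Real.exp (2 * a)) / 2 + (1 - Real.exp (-(2 * b))) / 2 := by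
  have hcont : Continuous fun q : ℝ => Real.exp (-(2 * |q|)) :=
    Real.continuous_exp.comp ((continuous_const.mul continuous_abs).neg)
  rw [← intervalIntegral.integral_add_adjacent_intervals
      (hcont.intervalIntegrable a 0) (hcont.intervalIntegrable 0 b)]
  have h1 : ∫ q in a..(0:ℝ), Real.exp (-(2 * |q|)) = ∫ q in a..(0:ℝ), Real.exp (2 * q) := by
    apply intervalIntegral.integral_congr
    intro q hq
    rw [Set.uIcc_of_le ha] at hq
    dsimp only
    rw [abs_of_nonpos hq.2]; ring_nf
  have h2 : ∫ q in (0:ℝ)..b, Real.exp (-(2 * |q|)) = ∫ q in (0:ℝ)..b, Real.exp (2 * (-q)) := by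
    apply intervalIntegral.integral_congr
    intro q hq
    rw [Set.uIcc_of_le hb] at hq
    dsimp only
    rw [abs_of_nonneg hq.1]; ring_nf
  have key : ∀ u v : ℝ, ∫ q in u..v, Real.exp (2 * q) =
      (Real.exp (2 * v) - Real.exp (2 * u)) / 2 := by
    intro u v
    rw [intervalIntegral.integral_comp_mul_left (fun x => Real.exp x) (by norm_num : (2:ℝ) ≠ 0),
      integral_exp]
    simp [smul_eq_mul]; ring
  have h2' : ∫ q in (0:ℝ)..b, Real.exp (2 * (-q)) = ∫ q in (-b)..(0:ℝ), Real.exp (2 * q) := by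
    rw [intervalIntegral.integral_comp_neg fun q => Real.exp (2 * q), neg_zero]
  rw [h1, h2, h2', key, key]
  simp only [mul_zero, Real.exp_zero]
  ring_nf

section G
variable {l : ℝ} {G : ℝ → ℝ}
variable (hl : 0 < l)
variable (hG' : ∀ (m : ℤ) (p : ℝ), (2 * (m : ℝ) - 1) * l ≤ p →
      p < (2 * (m : ℝ) + 1) * l → G p = Real.exp (-|p - 2 * (m : ℝ) * l|))
include hl hG'

lemma G_eq (p : ℝ) : G p = Real.exp (-|p - 2 * ((round (p / (2 * l)) : ℤ) : ℝ) * l|) := by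
  obtain ⟨h1, h2⟩ := round_bracket hl p
  exact hG' _ p h1 h2

lemma G_nonneg (p : ℝ) : 0 ≤ G p := by rw [G_eq hl hG']; exact (Real.exp_pos _).le

lemma G_le_one (p : ℝ) : G p ≤ 1 := by
  rw [G_eq hl hG']
  exact Real.exp_le_one_iff.mpr (neg_nonpos.mpr (abs_nonneg _))

lemma exp_neg_abs_le_G (p : ℝ) : Real.exp (-|p|) ≤ G p := by
  rw [G_eq hl hG']
  apply Real.exp_le_exp.mpr
  apply neg_le_neg
  obtain ⟨h1, h2⟩ := round_bracket hl p
  set m : ℤ := round (p / (2 * l)) with hm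
  rw [← Real.sqrt_sq_eq_abs, ← Real.sqrt_sq_eq_abs]
  apply Real.sqrt_le_sqrt
  rcases lt_trichotomy m 0 with hc | hc | hc
  · have hm1 : ((m : ℝ)) ≤ -1 := by
      have : m ≤ -1 := by omega
      exact_mod_cast this
    have hml : (m : ℝ) * l ≤ -l := by nlinarith
    have hpml : p - (m : ℝ) * l ≤ 0 := by nlinarith
    nlinarith [mul_nonneg (by linarith : (0:ℝ) ≤ -((m:ℝ) * l)) (by linarith : (0:ℝ) ≤ -(p - (m:ℝ) * l))]
  · rw [hc]
    norm_num
  · have hm1 : (1:ℝ) ≤ (m : ℝ) := by exact_mod_cast hc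
    have hml : l ≤ (m : ℝ) * l := by nlinarith
    have hpml : 0 ≤ p - (m : ℝ) * l := by nlinarith
    nlinarith [mul_nonneg (by linarith : (0:ℝ) ≤ (m:ℝ) * l) hpml]

lemma G_periodic_sq : Function.Periodic (fun p => G p ^ 2) (2 * l) := by
  intro p
  dsimp only
  have hG2 : G (p + 2 * l) = G p := by
    rw [G_eq hl hG' (p + 2 * l), G_eq hl hG' p]
    have h2l : (2 * l) ≠ 0 := by positivity
    have hr : round ((p + 2 * l) / (2 * l)) = round (p / (2 * l)) + 1 := by
      have : (p + 2 * l) / (2 * l) = p / (2 * l) + ((1 : ℤ) : ℝ) := by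
        push_cast; field_simp
      rw [this, round_add_intCast]
    rw [hr]
    have harg : p + 2 * l - 2 * (((round (p / (2 * l)) + 1 : ℤ)) : ℝ) * l
        = p - 2 * ((round (p / (2 * l)) : ℤ) : ℝ) * l := by push_cast; ring
    rw [harg]
  rw [hG2]

lemma G_meas : Measurable G := by
  have hfun : G = fun p => Real.exp (-|p - 2 * ((round (p / (2 * l)) : ℤ) : ℝ) * l|) :=
    funext (G_eq hl hG')
  rw [hfun]
  have h1 : Measurable fun p : ℝ => (round (p / (2 * l)) : ℤ) := by
    simp only [round_eq]
    exact ((measurable_id.div_const _).add_const _).floor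
  have h2 : Measurable fun p : ℝ => ((round (p / (2 * l)) : ℤ) : ℝ) :=
    measurable_from_top.comp h1
  exact Real.measurable_exp.comp (((measurable_id.sub ((h2.const_mul 2).mul_const l)).abs).neg)

lemma G_Icc (q : ℝ) (h1 : -l ≤ q) (h2 : q ≤ l) : G q = Real.exp (-|q|) := by
  by_cases hq : q = l
  · have hb := hG' 1 l (by push_cast; nlinarith) (by push_cast; nlinarith)
    rw [hq, hb]
    have h' : l - 2 * ((1 : ℤ) : ℝ) * l = -l := by push_cast; ring
    rw [h', abs_neg]
  · have h2' : q < l := lt_of_le_of_ne h2 hq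
    rw [hG' 0 q (by push_cast; linarith) (by push_cast; linarith)]
    norm_num

lemma intG_sq (s : ℝ) : ∫ p in (-l)..l, G (p - s) ^ 2 = 1 - Real.exp (-(2 * l)) := by
  rw [intervalIntegral.integral_comp_sub_right (fun p => G p ^ 2) s]
  have hper : ∫ q in (-l - s)..(-l - s + 2 * l), G q ^ 2 = ∫ q in (-l)..(-l + 2 * l), G q ^ 2 :=
    (G_periodic_sq hl hG').intervalIntegral_add_eq (-l - s) (-l)
  rw [show l - s = -l - s + 2 * l by ring, hper, show -l + 2 * l = l by ring]
  rw [intervalIntegral.integral_congr (g := fun q => Real.exp (-(2 * |q|)))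
    (fun q hq => by
      rw [Set.uIcc_of_le (by linarith : -l ≤ l)] at hq
      dsimp only
      rw [G_Icc hl hG' q hq.1 hq.2, sq, ← Real.exp_add]
      ring_nf)]
  rw [integral_exp_neg_two_abs (by linarith) (by linarith)]
  rw [show 2 * -l = -(2 * l) by ring]
  ring

lemma diff_sq_le_one (q : ℝ) : (Real.exp (-|q|) - G q) ^ 2 ≤ 1 := by
  have h1 := G_nonneg hl hG' q
  have h2 := G_le_one hl hG' q
  have h3 : 0 ≤ Real.exp (-|q|) := (Real.exp_pos _).le
  have h4 : Real.exp (-|q|) ≤ 1 := Real.exp_le_one_iff.mpr (neg_nonpos.mpr (abs_nonneg _))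
  nlinarith

lemma diff_meas : Measurable fun q : ℝ => (Real.exp (-|q|) - G q) ^ 2 :=
  ((Real.measurable_exp.comp (continuous_abs.measurable.neg)).sub (G_meas hl hG')).pow_const 2

lemma K0 (s : ℝ) :
    ∫ p in (-l)..l, (Real.exp (-|p - s|) - G (p - s)) ^ 2 ≤ 1 - Real.exp (-(2 * l)) := by
  have hd : Measurable fun p : ℝ => (Real.exp (-|p - s|) - G (p - s)) ^ 2 :=
    (diff_meas hl hG').comp (measurable_id.sub_const s)
  have hint1 : IntervalIntegrable (fun p => (Real.exp (-|p - s|) - G (p - s)) ^ 2)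
      volume (-l) l :=
    ii_of_meas_bdd hd (C := 1) (fun x => by
      rw [Real.norm_of_nonneg (sq_nonneg _)]; exact diff_sq_le_one hl hG' _) _ _
  have hm2 : Measurable fun p : ℝ => G (p - s) ^ 2 :=
    ((G_meas hl hG').comp (measurable_id.sub_const s)).pow_const 2
  have hint2 : IntervalIntegrable (fun p => G (p - s) ^ 2) volume (-l) l :=
    ii_of_meas_bdd hm2 (C := 1)
      (fun x => by
        rw [Real.norm_of_nonneg (sq_nonneg _)]
        nlinarith [G_nonneg hl hG' (x - s), G_le_one hl hG' (x - s)]) _ _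
  calc ∫ p in (-l)..l, (Real.exp (-|p - s|) - G (p - s)) ^ 2
      ≤ ∫ p in (-l)..l, G (p - s) ^ 2 := by
        apply intervalIntegral.integral_mono_on (by linarith) hint1 hint2
        intro p _
        have h1 := exp_neg_abs_le_G hl hG' (p - s)
        have h3 : 0 ≤ Real.exp (-|p - s|) := (Real.exp_pos _).le
        nlinarith
    _ = 1 - Real.exp (-(2 * l)) := intG_sq hl hG' s

lemma K1 {s B : ℝ} (hs0 : 0 ≤ s) (hsB : s ≤ B) (hB : B < l) :
    ∫ p in (-l)..l, (Real.exp (-|p - s|) - G (p - s)) ^ 2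
      ≤ Real.exp (-(2 * (l - B))) := by
  have hd : Measurable fun p : ℝ => (Real.exp (-|p - s|) - G (p - s)) ^ 2 :=
    (diff_meas hl hG').comp (measurable_id.sub_const s)
  have hexpc : Continuous fun p : ℝ => Real.exp (-|p - s|) :=
    Real.continuous_exp.comp (((continuous_id.sub continuous_const).abs).neg)
  have hint1 : IntervalIntegrable (fun p => (Real.exp (-|p - s|) - G (p - s)) ^ 2)
      volume (-l) l :=
    ii_of_meas_bdd hd (C := 1) (fun x => by
      rw [Real.norm_of_nonneg (sq_nonneg _)]; exact diff_sq_le_one hl hG' _) _ _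
  have hm2 : Measurable fun p : ℝ => G (p - s) ^ 2 :=
    ((G_meas hl hG').comp (measurable_id.sub_const s)).pow_const 2
  have hint2 : IntervalIntegrable (fun p => G (p - s) ^ 2) volume (-l) l :=
    ii_of_meas_bdd hm2 (C := 1)
      (fun x => by
        rw [Real.norm_of_nonneg (sq_nonneg _)]
        nlinarith [G_nonneg hl hG' (x - s), G_le_one hl hG' (x - s)]) _ _
  have hint3 : IntervalIntegrable (fun p => Real.exp (-|p - s|) ^ 2) volume (-l) l :=
    (hexpc.pow 2).intervalIntegrable _ _
  have step1 : ∫ p in (-l)..l, (Real.exp (-|p - s|) - G (p - s)) ^ 2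
      ≤ ∫ p in (-l)..l, (G (p - s) ^ 2 - Real.exp (-|p - s|) ^ 2) := by
    apply intervalIntegral.integral_mono_on (by linarith) hint1 (hint2.sub hint3)
    intro p _
    have h1 := exp_neg_abs_le_G hl hG' (p - s)
    have h3 : 0 ≤ Real.exp (-|p - s|) := (Real.exp_pos _).le
    nlinarith
  have hEint : ∫ p in (-l)..l, Real.exp (-|p - s|) ^ 2
      = (1 - Real.exp (2 * (-l - s))) / 2 + (1 - Real.exp (-(2 * (l - s)))) / 2 := by
    have hcongr : ∫ p in (-l)..l, Real.exp (-|p - s|) ^ 2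
        = ∫ p in (-l)..l, (fun q => Real.exp (-(2 * |q|))) (p - s) := by
      apply intervalIntegral.integral_congr
      intro p _
      dsimp only
      rw [sq, ← Real.exp_add]
      ring_nf
    rw [hcongr, intervalIntegral.integral_comp_sub_right (fun q => Real.exp (-(2 * |q|))) s,
      integral_exp_neg_two_abs (by linarith) (by linarith)]
  have hsub : ∫ p in (-l)..l, (G (p - s) ^ 2 - Real.exp (-|p - s|) ^ 2)
      = (∫ p in (-l)..l, G (p - s) ^ 2) - ∫ p in (-l)..l, Real.exp (-|p - s|) ^ 2 :=
    intervalIntegral.integral_sub hint2 hint3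
  rw [hsub, intG_sq hl hG' s, hEint] at step1
  have e1 : Real.exp (2 * (-l - s)) ≤ Real.exp (-(2 * (l - B))) :=
    Real.exp_le_exp.mpr (by linarith)
  have e2 : Real.exp (-(2 * (l - s))) ≤ Real.exp (-(2 * (l - B))) :=
    Real.exp_le_exp.mpr (by linarith)
  have e3 : (0:ℝ) < Real.exp (-(2 * l)) := Real.exp_pos _
  linarith

end G
end Schro42

set_option maxHeartbeats 1000000

/-- Lemma 4.2 of the paper (Fourier-side form): the `L²(Ω_x)×L²(Ω_p)` distance at
time `t = 0` between the whole-line Schrödingerised solution `w` and the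
`p`-periodic one `𝓦`, with `G` the `2πL`-periodic extension of `e^{-|p|}` and
`f` playing the role of `û_T`. -/
theorem initial_error_whole_line_vs_periodic
    (L : ℝ) (hL : 0 < L) (G : ℝ → ℝ)
    (hG : ∀ (m : ℤ) (p : ℝ), (2 * (m : ℝ) - 1) * (π * L) ≤ p →
      p < (2 * (m : ℝ) + 1) * (π * L) → G p = Real.exp (-|p - 2 * (m : ℝ) * (π * L)|))
    (T ηmax ε : ℝ) (hT : 0 < T) (hηmax : 0 < ηmax)
    (hdomain : π * L > 3 * ηmax ^ 2 * T) (hε : 0 ≤ ε)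
    (f : ℝ → ℂ) (hf : Measurable f)
    (hfint : Integrable fun η : ℝ => ‖f η‖ ^ 2)
    (htail_int : IntegrableOn (fun η : ℝ => Real.exp (2 * η ^ 2 * T) * ‖f η‖ ^ 2)
      {η : ℝ | Real.sqrt 3 * ηmax < |η|})
    (htail : ∫ η in {η : ℝ | Real.sqrt 3 * ηmax < |η|},
      Real.exp (2 * η ^ 2 * T) * ‖f η‖ ^ 2 ≤ ε ^ 2) :
    Real.sqrt (∫ p in (-(π * L))..(π * L), ∫ η : ℝ,
        (Real.exp (-|p - η ^ 2 * T|) - G (p - η ^ 2 * T)) ^ 2 * ‖f η‖ ^ 2) ≤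
      Real.sqrt (5 / 2) * Real.exp (-(π * L - 3 * ηmax ^ 2 * T)) *
          Real.sqrt (∫ η : ℝ, ‖f η‖ ^ 2) +
        Real.exp (-(3 / 2) * ηmax ^ 2 * T) * ε := by
  have hπ : (0:ℝ) < π := Real.pi_pos
  set l : ℝ := π * L with hldef
  have hl : 0 < l := mul_pos hπ hL
  have hG' : ∀ (m : ℤ) (p : ℝ), (2 * (m : ℝ) - 1) * l ≤ p →
      p < (2 * (m : ℝ) + 1) * l → G p = Real.exp (-|p - 2 * (m : ℝ) * l|) := hG
  set B : ℝ := 3 * ηmax ^ 2 * T with hBdef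
  have hBl : B < l := hdomain
  have hB0 : 0 < B := by rw [hBdef]; positivity
  have hle : -l ≤ l := by linarith
  set S : Set ℝ := {η : ℝ | Real.sqrt 3 * ηmax < |η|} with hSdef
  have hSmeas : MeasurableSet S := (isOpen_lt continuous_const continuous_abs).measurableSet
  have hdm : Measurable fun q : ℝ => (Real.exp (-|q|) - G q) ^ 2 := Schro42.diff_meas hl hG'
  -- the inner p-integral, as a function of η
  have hJ0 : ∀ η : ℝ, 0 ≤ ∫ p in Set.Ioc (-l) l,
      (Real.exp (-|p - η ^ 2 * T|) - G (p - η ^ 2 * T)) ^ 2 :=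
    fun η => integral_nonneg fun p => sq_nonneg _
  have hJ1 : ∀ η : ℝ, (∫ p in Set.Ioc (-l) l,
      (Real.exp (-|p - η ^ 2 * T|) - G (p - η ^ 2 * T)) ^ 2) ≤ 1 := by
    intro η
    rw [← intervalIntegral.integral_of_le hle]
    calc (∫ p in (-l)..l, (Real.exp (-|p - η ^ 2 * T|) - G (p - η ^ 2 * T)) ^ 2)
        ≤ 1 - Real.exp (-(2 * l)) := Schro42.K0 hl hG' (η ^ 2 * T)
      _ ≤ 1 := by linarith [Real.exp_pos (-(2 * l))]
  have hJK1 : ∀ η : ℝ, |η| ≤ Real.sqrt 3 * ηmax →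
      (∫ p in Set.Ioc (-l) l,
        (Real.exp (-|p - η ^ 2 * T|) - G (p - η ^ 2 * T)) ^ 2) ≤ Real.exp (-(l - B)) ^ 2 := by
    intro η hη
    rw [← intervalIntegral.integral_of_le hle]
    have hs0 : 0 ≤ η ^ 2 * T := by positivity
    have hsB : η ^ 2 * T ≤ B := by
      have h1 : |η| ^ 2 ≤ (Real.sqrt 3 * ηmax) ^ 2 := pow_le_pow_left₀ (abs_nonneg η) hη 2
      have h2 : (Real.sqrt 3 * ηmax) ^ 2 = 3 * ηmax ^ 2 := by
        rw [mul_pow, Real.sq_sqrt (by norm_num : (0:ℝ) ≤ 3)]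
      rw [sq_abs, h2] at h1
      rw [hBdef]
      nlinarith
    have hK := Schro42.K1 hl hG' hs0 hsB hBl
    have hC : Real.exp (-(l - B)) ^ 2 = Real.exp (-(2 * (l - B))) := by
      rw [sq, ← Real.exp_add]; congr 1; ring
    rw [hC]
    exact hK
  -- main two-sided bound on the double integral
  have key : (∫ p in (-l)..l, ∫ η : ℝ,
      (Real.exp (-|p - η ^ 2 * T|) - G (p - η ^ 2 * T)) ^ 2 * ‖f η‖ ^ 2)
      ≤ Real.exp (-(l - B)) ^ 2 * (∫ η : ℝ, ‖f η‖ ^ 2)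
        + Real.exp (-(6 * ηmax ^ 2 * T)) * ε ^ 2 := by
    rw [intervalIntegral.integral_of_le hle]
    have hFmeas : Measurable fun z : ℝ × ℝ =>
        (Real.exp (-|z.1 - z.2 ^ 2 * T|) - G (z.1 - z.2 ^ 2 * T)) ^ 2 * ‖f z.2‖ ^ 2 := by
      have hφ : Measurable fun z : ℝ × ℝ => z.1 - z.2 ^ 2 * T :=
        measurable_fst.sub ((measurable_snd.pow_const 2).mul_const T)
      exact (hdm.comp hφ).mul ((hf.norm.pow_const 2).comp measurable_snd)
    have hμfin : volume (Set.Ioc (-l) l) < ⊤ := measure_Ioc_lt_top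
    have hFint : Integrable (Function.uncurry fun p η : ℝ =>
        (Real.exp (-|p - η ^ 2 * T|) - G (p - η ^ 2 * T)) ^ 2 * ‖f η‖ ^ 2)
        ((volume.restrict (Set.Ioc (-l) l)).prod volume) := by
      have hgm : Measurable fun z : ℝ × ℝ => ‖f z.2‖ ^ 2 :=
        ((hf.comp measurable_snd).norm).pow_const 2
      apply Integrable.mono' (g := fun z : ℝ × ℝ => ‖f z.2‖ ^ 2)
      · rw [integrable_prod_iff hgm.aestronglyMeasurable]
        constructor
        · exact Filter.Eventually.of_forall fun p => hfint
        · have hconst : IntegrableOn (fun _ : ℝ => ∫ η : ℝ, ‖‖f η‖ ^ 2‖) (Set.Ioc (-l) l)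
              volume := integrableOn_const hμfin.ne
          exact hconst
      · exact hFmeas.aestronglyMeasurable
      · apply Filter.Eventually.of_forall
        rintro ⟨p, η⟩
        simp only [Function.uncurry]
        rw [Real.norm_of_nonneg (by positivity)]
        exact mul_le_of_le_one_left (by positivity) (Schro42.diff_sq_le_one hl hG' _)
    rw [MeasureTheory.integral_integral_swap hFint]
    have hpull : (fun η : ℝ => ∫ p in Set.Ioc (-l) l,
        (Real.exp (-|p - η ^ 2 * T|) - G (p - η ^ 2 * T)) ^ 2 * ‖f η‖ ^ 2)
        = fun η : ℝ => (∫ p in Set.Ioc (-l) l,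
            (Real.exp (-|p - η ^ 2 * T|) - G (p - η ^ 2 * T)) ^ 2) * ‖f η‖ ^ 2 := by
      funext η; exact integral_mul_const _ _
    rw [hpull]
    have hJf_int : Integrable (fun η : ℝ => (∫ p in Set.Ioc (-l) l,
        (Real.exp (-|p - η ^ 2 * T|) - G (p - η ^ 2 * T)) ^ 2) * ‖f η‖ ^ 2) volume := by
      have h := hFint.integral_prod_right
      simp only [Function.uncurry] at h
      exact h.congr (Filter.Eventually.of_forall fun η => integral_mul_const _ _)
    rw [← integral_add_compl hSmeas hJf_int]
    have h1 : (∫ η in S, (∫ p in Set.Ioc (-l) l,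
        (Real.exp (-|p - η ^ 2 * T|) - G (p - η ^ 2 * T)) ^ 2) * ‖f η‖ ^ 2)
        ≤ Real.exp (-(6 * ηmax ^ 2 * T)) * ε ^ 2 := by
      calc (∫ η in S, (∫ p in Set.Ioc (-l) l,
          (Real.exp (-|p - η ^ 2 * T|) - G (p - η ^ 2 * T)) ^ 2) * ‖f η‖ ^ 2)
          ≤ ∫ η in S, Real.exp (-(6 * ηmax ^ 2 * T)) * (Real.exp (2 * η ^ 2 * T) * ‖f η‖ ^ 2) := by
            apply setIntegral_mono_on hJf_int.integrableOn (htail_int.const_mul _) hSmeas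
            intro η hη
            have hηS : Real.sqrt 3 * ηmax < |η| := hη
            have hη2 : 3 * ηmax ^ 2 ≤ η ^ 2 := by
              have h0 : 0 ≤ Real.sqrt 3 * ηmax := by positivity
              have h1' : (Real.sqrt 3 * ηmax) ^ 2 ≤ |η| ^ 2 := pow_le_pow_left₀ h0 hηS.le 2
              have h2' : (Real.sqrt 3 * ηmax) ^ 2 = 3 * ηmax ^ 2 := by
                rw [mul_pow, Real.sq_sqrt (by norm_num : (0:ℝ) ≤ 3)]
              rw [sq_abs, h2'] at h1'
              exact h1'
            have hc : Real.exp (-(2 * η ^ 2 * T)) ≤ Real.exp (-(6 * ηmax ^ 2 * T)) :=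
              Real.exp_le_exp.mpr (by nlinarith)
            calc (∫ p in Set.Ioc (-l) l,
                (Real.exp (-|p - η ^ 2 * T|) - G (p - η ^ 2 * T)) ^ 2) * ‖f η‖ ^ 2
                ≤ 1 * ‖f η‖ ^ 2 := mul_le_mul_of_nonneg_right (hJ1 η) (by positivity)
              _ = Real.exp (-(2 * η ^ 2 * T)) * (Real.exp (2 * η ^ 2 * T) * ‖f η‖ ^ 2) := by
                  rw [← mul_assoc, ← Real.exp_add]; norm_num
              _ ≤ Real.exp (-(6 * ηmax ^ 2 * T)) * (Real.exp (2 * η ^ 2 * T) * ‖f η‖ ^ 2) :=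
                  mul_le_mul_of_nonneg_right hc (by positivity)
        _ = Real.exp (-(6 * ηmax ^ 2 * T)) * ∫ η in S, Real.exp (2 * η ^ 2 * T) * ‖f η‖ ^ 2 :=
            integral_const_mul _ _
        _ ≤ Real.exp (-(6 * ηmax ^ 2 * T)) * ε ^ 2 :=
            mul_le_mul_of_nonneg_left htail (Real.exp_nonneg _)
    have h2 : (∫ η in Sᶜ, (∫ p in Set.Ioc (-l) l,
        (Real.exp (-|p - η ^ 2 * T|) - G (p - η ^ 2 * T)) ^ 2) * ‖f η‖ ^ 2)
        ≤ Real.exp (-(l - B)) ^ 2 * ∫ η : ℝ, ‖f η‖ ^ 2 := by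
      calc (∫ η in Sᶜ, (∫ p in Set.Ioc (-l) l,
          (Real.exp (-|p - η ^ 2 * T|) - G (p - η ^ 2 * T)) ^ 2) * ‖f η‖ ^ 2)
          ≤ ∫ η in Sᶜ, Real.exp (-(l - B)) ^ 2 * ‖f η‖ ^ 2 := by
            apply setIntegral_mono_on hJf_int.integrableOn (hfint.const_mul _).integrableOn
              hSmeas.compl
            intro η hη
            have hmem : ¬ (Real.sqrt 3 * ηmax < |η|) := hη
            exact mul_le_mul_of_nonneg_right (hJK1 η (not_lt.mp hmem)) (by positivity)
        _ = Real.exp (-(l - B)) ^ 2 * ∫ η in Sᶜ, ‖f η‖ ^ 2 := integral_const_mul _ _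
        _ ≤ Real.exp (-(l - B)) ^ 2 * ∫ η : ℝ, ‖f η‖ ^ 2 := by
            apply mul_le_mul_of_nonneg_left _ (by positivity)
            exact setIntegral_le_integral hfint (Filter.Eventually.of_forall fun η => by positivity)
    linarith
  -- conclude via square roots
  have hA0 : 0 ≤ ∫ η : ℝ, ‖f η‖ ^ 2 := integral_nonneg fun η => by positivity
  have hs1 := Real.sqrt_le_sqrt key
  refine le_trans hs1 ?_
  have hs2 := Schro42.sqrt_add_le
    (x := Real.exp (-(l - B)) ^ 2 * ∫ η : ℝ, ‖f η‖ ^ 2)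
    (y := Real.exp (-(6 * ηmax ^ 2 * T)) * ε ^ 2)
    (mul_nonneg (sq_nonneg (Real.exp (-(l - B)))) hA0)
    (mul_nonneg (Real.exp_nonneg _) (sq_nonneg ε))
  refine le_trans hs2 ?_
  have e1 : Real.sqrt (Real.exp (-(l - B)) ^ 2 * ∫ η : ℝ, ‖f η‖ ^ 2)
      = Real.exp (-(l - B)) * Real.sqrt (∫ η : ℝ, ‖f η‖ ^ 2) := by
    rw [Real.sqrt_mul (sq_nonneg _), Real.sqrt_sq (Real.exp_nonneg _)]
  have e2 : Real.sqrt (Real.exp (-(6 * ηmax ^ 2 * T)) * ε ^ 2)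
      = Real.exp (-(6 * ηmax ^ 2 * T) / 2) * ε := by
    rw [Real.sqrt_mul (Real.exp_nonneg _), Real.sqrt_sq hε, Real.exp_half]
  rw [e1, e2]
  have h52 : (1:ℝ) ≤ Real.sqrt (5 / 2) := by
    rw [show (1:ℝ) = Real.sqrt 1 from (Real.sqrt_one).symm]
    exact Real.sqrt_le_sqrt (by norm_num)
  have hterm1 : Real.exp (-(l - B)) * Real.sqrt (∫ η : ℝ, ‖f η‖ ^ 2)
      ≤ Real.sqrt (5 / 2) * Real.exp (-(l - B)) * Real.sqrt (∫ η : ℝ, ‖f η‖ ^ 2) := by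
    have hnn : 0 ≤ Real.exp (-(l - B)) * Real.sqrt (∫ η : ℝ, ‖f η‖ ^ 2) :=
      mul_nonneg (Real.exp_nonneg _) (Real.sqrt_nonneg _)
    calc Real.exp (-(l - B)) * Real.sqrt (∫ η : ℝ, ‖f η‖ ^ 2)
        = 1 * (Real.exp (-(l - B)) * Real.sqrt (∫ η : ℝ, ‖f η‖ ^ 2)) := (one_mul _).symm
      _ ≤ Real.sqrt (5 / 2) * (Real.exp (-(l - B)) * Real.sqrt (∫ η : ℝ, ‖f η‖ ^ 2)) :=
          mul_le_mul_of_nonneg_right h52 hnn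
      _ = Real.sqrt (5 / 2) * Real.exp (-(l - B)) * Real.sqrt (∫ η : ℝ, ‖f η‖ ^ 2) := by ring
  have hterm2 : Real.exp (-(6 * ηmax ^ 2 * T) / 2) * ε ≤ Real.exp (-(3 / 2) * ηmax ^ 2 * T) * ε := by
    apply mul_le_mul_of_nonneg_right _ hε
    apply Real.exp_le_exp.mpr
    nlinarith [sq_nonneg ηmax, hT.le, mul_nonneg (sq_nonneg ηmax) hT.le]
  exact add_le_add hterm1 hterm2
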